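/- Let s > 2 be an integer. The set S⁻ = { ∑_{n≥1} (-1)^n α_n / s^{α_1+...+α_n} : α_n ∈ {1,...,s-1} } has Lebesgue measure zero. -/

import Mathlib

/-- The set `S⁻` of sums `∑ (-1)ⁿ αₙ / s^(α₁+⋯+αₙ)` over digit sequences with values in
`{1,…,s-1}` (the `n`-th term, counting from `1`, carries sign `(-1)ⁿ`). -/
def Sneg (s : ℕ) : Set ℝ :=
  {x : ℝ | ∃ α : ℕ → ℕ, (∀ n, 1 ≤ α n ∧ α n ≤ s - 1) ∧
    x = ∑' n : ℕ, (-1 : ℝ) ^ (n + 1) * (α n : ℝ) / (s : ℝ) ^ (∑ k ∈ Finset.range (n + 1), α k)}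

open MeasureTheory Finset

/-- Center of the covering ball attached to a digit prefix of length `n`. -/
noncomputable def SnegCenter (s n : ℕ) (p : Fin n → Fin (s - 1)) : ℝ :=
  ∑ k ∈ Finset.range n, (-1 : ℝ) ^ (k + 1) *
      (((if h : k < n then (p ⟨k, h⟩ : ℕ) + 1 else 1) : ℕ) : ℝ) /
      (s : ℝ) ^ (∑ j ∈ Finset.range (k + 1), (if h : j < n then (p ⟨j, h⟩ : ℕ) + 1 else 1))

lemma Sneg_subset_cover (s n : ℕ) (hs : 2 < s) :
    Sneg s ⊆ ⋃ p : Fin n → Fin (s - 1),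
      Metric.closedBall (SnegCenter s n p) ((s : ℝ)⁻¹ ^ n) := by
  rintro x ⟨α, hα, rfl⟩
  set S : ℝ := (s : ℝ) with hSdef
  have hS3 : (3 : ℝ) ≤ S := by have h : (3:ℕ) ≤ s := hs; rw [hSdef]; exact_mod_cast h
  have hS1 : (1 : ℝ) < S := by linarith
  have hS0 : (0 : ℝ) < S := by linarith
  have hSinv1 : S⁻¹ < 1 := by
    rw [inv_lt_one_iff₀]; right; exact hS1
  have hSinv0 : (0 : ℝ) ≤ S⁻¹ := by positivity
  set β : ℕ → ℕ := fun m => ∑ j ∈ Finset.range m, α j with hβdef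
  set f : ℕ → ℝ := fun k =>
    (-1 : ℝ) ^ (k + 1) * (α k : ℝ) / S ^ (∑ j ∈ Finset.range (k + 1), α j) with hfdef
  -- β m ≥ m
  have hβge : ∀ m, m ≤ β m := by
    intro m
    calc m = ∑ _j ∈ Finset.range m, 1 := by simp
      _ ≤ β m := Finset.sum_le_sum fun j _ => (hα j).1
  -- β (m + k) ≥ β m + k
  have hβadd : ∀ m k, β m + k ≤ β (m + k) := by
    intro m k
    induction k with
    | zero => simp
    | succ k ih =>
        have h1 : β (m + (k + 1)) = β (m + k) + α (m + k) := by
          rw [hβdef]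
          simp only []
          rw [show m + (k + 1) = (m + k) + 1 by omega, Finset.sum_range_succ]
        have h2 := (hα (m + k)).1
        omega
  -- digit cast bound
  have hcast : ∀ k, (α k : ℝ) ≤ S - 1 := by
    intro k
    have h1 : α k ≤ s - 1 := (hα k).2
    have h2 : (α k : ℝ) ≤ ((s - 1 : ℕ) : ℝ) := by exact_mod_cast h1
    have h3 : ((s - 1 : ℕ) : ℝ) = S - 1 := by
      have : (1 : ℕ) ≤ s := by omega
      push_cast [this]; ring
    linarith [h2, h3.le]
  -- |f k| bound
  have habs : ∀ k, |f k| = (α k : ℝ) / S ^ (β (k + 1)) := by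
    intro k
    rw [hfdef]
    simp only []
    rw [abs_div, abs_mul, abs_pow, abs_neg, abs_one, one_pow, one_mul,
      abs_of_nonneg (by positivity : (0:ℝ) ≤ (α k : ℝ)),
      abs_of_nonneg (by positivity : (0:ℝ) ≤ S ^ (∑ j ∈ Finset.range (k + 1), α j))]
  have hfb : ∀ k, |f k| ≤ (S - 1) * S⁻¹ * S⁻¹ ^ k := by
    intro k
    rw [habs k]
    have hβk : (k + 1 : ℕ) ≤ β (k + 1) := hβge (k + 1)
    have hpow : S ^ (k + 1) ≤ S ^ (β (k + 1)) := pow_le_pow_right₀ hS1.le hβk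
    have : (α k : ℝ) / S ^ (β (k + 1)) ≤ (S - 1) / S ^ (k + 1) :=
      div_le_div₀ (by linarith [hcast k]) (hcast k) (by positivity) hpow
    calc (α k : ℝ) / S ^ (β (k + 1)) ≤ (S - 1) / S ^ (k + 1) := this
      _ = (S - 1) * S⁻¹ * S⁻¹ ^ k := by
          rw [div_eq_mul_inv, ← inv_pow, pow_succ]; ring
  have hgsum : Summable (fun k : ℕ => (S - 1) * S⁻¹ * S⁻¹ ^ k) :=
    (summable_geometric_of_lt_one hSinv0 hSinv1).mul_left _
  have hsumf : Summable f := Summable.of_norm_bounded hgsum (by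
    intro k; rw [Real.norm_eq_abs]; exact hfb k)
  -- the covering digit prefix
  have hd : ∀ k, 1 ≤ α k ∧ α k ≤ s - 1 := hα
  refine Set.mem_iUnion.2 ⟨fun k => ⟨α k - 1, by have := hα k; omega⟩, ?_⟩
  rw [Metric.mem_closedBall, Real.dist_eq]
  -- center equals partial sum
  have hcenter : SnegCenter s n (fun k => ⟨α k - 1, by have := hα k; omega⟩)
      = ∑ k ∈ Finset.range n, f k := by
    unfold SnegCenter
    refine Finset.sum_congr rfl fun k hk => ?_
    rw [Finset.mem_range] at hk
    have hinner : ∀ j ∈ Finset.range (k + 1),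
        (if h : j < n then (α j - 1) + 1 else 1) = α j := by
      intro j hj
      rw [Finset.mem_range] at hj
      have hjn : j < n := lt_of_lt_of_le hj hk
      rw [dif_pos hjn]
      have := (hα j).1; omega
    rw [dif_pos hk, Finset.sum_congr rfl hinner]
    have h1 : α k - 1 + 1 = α k := by have := (hα k).1; omega
    rw [h1, hfdef]
  rw [hcenter]
  -- tail estimate
  have htail : (∑' k, f k) - ∑ k ∈ Finset.range n, f k = ∑' i, f (i + n) := by
    have := hsumf.sum_add_tsum_nat_add n
    linarith [this]
  rw [htail]
  set g : ℕ → ℝ := fun i => (S - 1) * S⁻¹ ^ (β n + 1) * S⁻¹ ^ i with hgdef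
  have hgsum' : Summable g := (summable_geometric_of_lt_one hSinv0 hSinv1).mul_left _
  have hfg : ∀ i, |f (i + n)| ≤ g i := by
    intro i
    rw [habs]
    have hβb : β n + i + 1 ≤ β (i + n + 1) := by
      have h := hβadd n (i + 1)
      rw [show n + (i + 1) = i + n + 1 from by omega] at h
      omega
    have hpow : S ^ (β n + i + 1) ≤ S ^ (β (i + n + 1)) := pow_le_pow_right₀ hS1.le hβb
    have h1 : (α (i + n) : ℝ) / S ^ (β (i + n + 1)) ≤ (S - 1) / S ^ (β n + i + 1) :=
      div_le_div₀ (by linarith [hcast (i + n)]) (hcast (i + n)) (by positivity) hpow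
    calc (α (i + n) : ℝ) / S ^ (β (i + n + 1)) ≤ (S - 1) / S ^ (β n + i + 1) := h1
      _ = g i := by
          rw [hgdef]
          simp only []
          rw [div_eq_mul_inv, ← inv_pow]
          rw [show β n + i + 1 = (β n + 1) + i by omega, pow_add]
          ring
  have hsumfa : Summable (fun i => |f (i + n)|) := by
    apply Summable.of_nonneg_of_le (fun i => abs_nonneg _) hfg hgsum'
  have h2 : |∑' i, f (i + n)| ≤ ∑' i, |f (i + n)| := by
    have := norm_tsum_le_tsum_norm (f := fun i => f (i + n)) (by simpa [Real.norm_eq_abs] using hsumfa)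
    simpa [Real.norm_eq_abs] using this
  have h3 : (∑' i, |f (i + n)|) ≤ ∑' i, g i := hsumfa.tsum_le_tsum hfg hgsum'
  have h4 : (∑' i, g i) = (S - 1) * S⁻¹ ^ (β n + 1) * (1 - S⁻¹)⁻¹ := by
    rw [hgdef, tsum_mul_left, tsum_geometric_of_lt_one hSinv0 hSinv1]
  have h5 : (S - 1) * S⁻¹ ^ (β n + 1) * (1 - S⁻¹)⁻¹ = S⁻¹ ^ (β n) := by
    have hS1' : S - 1 ≠ 0 := by linarith
    have hS0' : S ≠ 0 := by linarith
    have h1s : 1 - S⁻¹ = (S - 1) / S := by field_simp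
    rw [h1s, pow_succ]
    field_simp
  have h6 : S⁻¹ ^ (β n) ≤ S⁻¹ ^ n := pow_le_pow_of_le_one hSinv0 hSinv1.le (hβge n)
  calc |∑' i, f (i + n)| ≤ ∑' i, |f (i + n)| := h2
    _ ≤ ∑' i, g i := h3
    _ = S⁻¹ ^ (β n) := by rw [h4, h5]
    _ ≤ S⁻¹ ^ n := h6

/-- For an integer `s > 2`, the set `S⁻` has Lebesgue measure zero. -/
theorem stmt13 (s : ℕ) (hs : 2 < s) : MeasureTheory.volume (Sneg s) = 0 := by
  set r : ℝ := ((s - 1 : ℕ) : ℝ) / (s : ℝ) with hrdef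
  have hs0 : (0 : ℝ) < (s : ℝ) := by exact_mod_cast Nat.zero_lt_of_lt hs
  have hr0 : 0 ≤ r := by positivity
  have hr1 : r < 1 := by
    rw [hrdef, div_lt_one hs0]
    exact_mod_cast Nat.sub_lt (by omega) one_pos
  have key : ∀ n : ℕ, MeasureTheory.volume (Sneg s) ≤ ENNReal.ofReal (2 * r ^ n) := by
    intro n
    have hle : MeasureTheory.volume (Sneg s) ≤
        ∑' p : Fin n → Fin (s - 1),
          volume (Metric.closedBall (SnegCenter s n p) ((s : ℝ)⁻¹ ^ n)) :=
      (measure_mono (Sneg_subset_cover s n hs)).trans (measure_iUnion_le _)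
    have hball : ∀ p : Fin n → Fin (s - 1),
        volume (Metric.closedBall (SnegCenter s n p) ((s : ℝ)⁻¹ ^ n)) =
          ENNReal.ofReal (2 * (s : ℝ)⁻¹ ^ n) := fun p => Real.volume_closedBall _ _
    rw [tsum_congr hball] at hle
    rw [tsum_fintype, Finset.sum_const, Finset.card_univ, Fintype.card_fun,
      Fintype.card_fin, Fintype.card_fin, nsmul_eq_mul] at hle
    refine hle.trans (le_of_eq ?_)
    rw [← ENNReal.ofReal_natCast ((s - 1) ^ n),
      ← ENNReal.ofReal_mul (by positivity)]
    congr 1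
    push_cast
    rw [hrdef, div_pow, div_eq_mul_inv, ← inv_pow]
    ring
  have htend : Filter.Tendsto (fun n => ENNReal.ofReal (2 * r ^ n))
      Filter.atTop (nhds 0) := by
    have h1 := (tendsto_pow_atTop_nhds_zero_of_lt_one hr0 hr1).const_mul (2 : ℝ)
    rw [mul_zero] at h1
    have h2 := ENNReal.tendsto_ofReal h1
    simpa using h2
  exact le_antisymm (ge_of_tendsto' htend key) zero_le
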